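/- Let s = 1 and κ ∈ ℂ, and let σ, σ̃ : ℝ → ℂ be differentiable functions. Suppose R : ℝ → Matrix (Fin 3) (Fin 3) ℂ is differentiable, R(x) is unit lower triangular for every x, and R'(x) + R(x)·F(σ̃)(x) = F(σ)(x)·R(x) for all x ∈ ℝ. Then (σ − σ̃)'(x) = 0 for all x ∈ ℝ; consequently σ − σ̃ is a constant function. -/
import Mathlib


/-- The matrix F(σ) associated with the differential expression
ℓ_{σ,s,κ}(y) = y''' + s(σ'y)' + sσ'y' + κσ''y. -/
noncomputable def Fmat (s κ : ℂ) (σ : ℝ → ℂ) (x : ℝ) : Matrix (Fin 3) (Fin 3) ℂ :=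
  !![ -(s + κ) * σ x, 1, 0;
      -(3 * κ ^ 2 / 2 + s ^ 2 / 2 + 2 * κ * s) * σ x ^ 2, 2 * κ * σ x, 1;
      κ * (κ ^ 2 - s ^ 2) * σ x ^ 3,
        -(3 * κ ^ 2 / 2 + s ^ 2 / 2 - 2 * κ * s) * σ x ^ 2, (s - κ) * σ x ]

/-- A 3×3 matrix is unit lower triangular if its diagonal entries are 1 and the
entries above the diagonal are 0. -/
def UnitLowerTriangular (A : Matrix (Fin 3) (Fin 3) ℂ) : Prop :=
  (∀ i, A i i = 1) ∧ ∀ i j : Fin 3, i < j → A i j = 0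

/-- Key step of the uniqueness theorem for s = 1: if R is a differentiable unit
lower triangular matrix function satisfying R' + R·F(σ̃) = F(σ)·R with σ, σ̃
differentiable, then (σ − σ̃)' = 0, so σ − σ̃ is constant. -/
theorem sigma_diff_const_of_s_eq_one (s : ℂ) (hs : s = 1) (κ : ℂ) (σ σtil : ℝ → ℂ)
    (hσ : Differentiable ℝ σ) (hσtil : Differentiable ℝ σtil)
    (R R' : ℝ → Matrix (Fin 3) (Fin 3) ℂ)
    (hR : ∀ (x : ℝ) (i j : Fin 3), HasDerivAt (fun t => R t i j) (R' x i j) x)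
    (hTri : ∀ x : ℝ, UnitLowerTriangular (R x))
    (heq : ∀ x : ℝ, R' x + R x * Fmat s κ σtil x = Fmat s κ σ x * R x) :
    (∀ x : ℝ, deriv (fun t => σ t - σtil t) x = 0)
    ∧ ∃ c : ℂ, ∀ x : ℝ, σ x - σtil x = c := by
  subst hs
  -- entry facts from triangularity
  have h00 : ∀ t, R t 0 0 = 1 := fun t => (hTri t).1 0
  have h11 : ∀ t, R t 1 1 = 1 := fun t => (hTri t).1 1
  have h22 : ∀ t, R t 2 2 = 1 := fun t => (hTri t).1 2
  have h01 : ∀ t, R t 0 1 = 0 := fun t => (hTri t).2 0 1 (by decide)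
  have h02 : ∀ t, R t 0 2 = 0 := fun t => (hTri t).2 0 2 (by decide)
  have h12 : ∀ t, R t 1 2 = 0 := fun t => (hTri t).2 1 2 (by decide)
  -- derivatives of constant entries vanish
  have hd00 : ∀ t, R' t 0 0 = 0 := by
    intro t
    have h2 : HasDerivAt (fun u => R u 0 0) 0 t := by
      have he : (fun u : ℝ => R u 0 0) = fun _ => (1 : ℂ) := funext fun u => h00 u
      rw [he]; exact hasDerivAt_const _ _
    exact (hR t 0 0).unique h2
  have hd11 : ∀ t, R' t 1 1 = 0 := by
    intro t
    have h2 : HasDerivAt (fun u => R u 1 1) 0 t := by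
      have he : (fun u : ℝ => R u 1 1) = fun _ => (1 : ℂ) := funext fun u => h11 u
      rw [he]; exact hasDerivAt_const _ _
    exact (hR t 1 1).unique h2
  -- entry equations
  have entry : ∀ (t : ℝ) (i j : Fin 3),
      R' t i j + (R t * Fmat 1 κ σtil t) i j = (Fmat 1 κ σ t * R t) i j := by
    intro t i j
    have h := congrFun (congrFun (heq t) i) j
    simpa [Matrix.add_apply] using h
  -- R t 1 0 = (1+κ)(σ-σ̃)
  have ha : ∀ t, R t 1 0 = (1 + κ) * (σ t - σtil t) := by
    intro t
    have h := entry t 0 0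
    simp [Fmat, Matrix.mul_apply, Fin.sum_univ_three, h00, h01, h02, hd00] at h
    linear_combination -h
  -- R t 2 1 = (1-κ)(σ-σ̃)
  have hc : ∀ t, R t 2 1 = (1 - κ) * (σ t - σtil t) := by
    intro t
    have h := entry t 1 1
    simp [Fmat, Matrix.mul_apply, Fin.sum_univ_three, h01, h02, h11, h12, hd11, ha t] at h
    linear_combination -h
  -- derivative facts
  have hD : ∀ t, HasDerivAt (fun u => σ u - σtil u) (deriv σ t - deriv σtil t) t :=
    fun t => ((hσ t).hasDerivAt.sub (hσtil t).hasDerivAt)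
  have hd10 : ∀ t, R' t 1 0 = (1 + κ) * (deriv σ t - deriv σtil t) := by
    intro t
    have h2 : HasDerivAt (fun u => R u 1 0) ((1 + κ) * (deriv σ t - deriv σtil t)) t := by
      have he : (fun u : ℝ => R u 1 0) = fun u => (1 + κ) * (σ u - σtil u) :=
        funext fun u => ha u
      rw [he]; exact (hD t).const_mul _
    exact (hR t 1 0).unique h2
  have hd21 : ∀ t, R' t 2 1 = (1 - κ) * (deriv σ t - deriv σtil t) := by
    intro t
    have h2 : HasDerivAt (fun u => R u 2 1) ((1 - κ) * (deriv σ t - deriv σtil t)) t := by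
      have he : (fun u : ℝ => R u 2 1) = fun u => (1 - κ) * (σ u - σtil u) :=
        funext fun u => hc u
      rw [he]; exact (hD t).const_mul _
    exact (hR t 2 1).unique h2
  -- main derivative vanishing
  have key : ∀ x : ℝ, deriv (fun t => σ t - σtil t) x = 0 := by
    intro x
    rw [(hD x).deriv]
    have h1 := entry x 1 0
    have h2 := entry x 2 1
    simp [Fmat, Matrix.mul_apply, Fin.sum_univ_three, h00, h01, h11, h12, h22,
      ha x, hc x, hd10 x, hd21 x] at h1 h2
    linear_combination (h1 + h2) / 2
  refine ⟨key, σ 0 - σtil 0, fun x => ?_⟩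
  have := is_const_of_deriv_eq_zero (f := fun t => σ t - σtil t) (hσ.sub hσtil) key x 0
  simpa using this
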